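/- arXiv:1711.00239 — 3 statements merged into one kernel-verified Lean document; each statement's English description precedes it below -/
import Mathlib

section
/- Let Y, Y* and Ȳ⁽¹⁾,…,Ȳ⁽ᵐ⁾, Ŷ⁽¹⁾,…,Ŷ⁽ᵐ⁾ be real c×t matrices. Suppose Y satisfies ‖Y − Ȳ⁽ᵏ⁾‖²_F ≤ min_j ‖Ŷ⁽ʲ⁾ − Ȳ⁽ᵏ⁾‖²_F for all k = 1,…,m, and that there exists an index k such that Tr((Ŷ⁽ʲ⁾ − Y)ᵀ (Y* − Ȳ⁽ᵏ⁾)) ≤ 0 for all j = 1,…,m. Then ‖Y − Y*‖²_F ≤ min_j ‖Ŷ⁽ʲ⁾ − Y*‖²_F. -/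
open Finset Matrix

/-- Squared Frobenius norm of a real matrix. -/
noncomputable def frobSq {c t : ℕ} (A : Matrix (Fin c) (Fin t) ℝ) : ℝ :=
  ∑ i, ∑ j, (A i j) ^ 2

lemma trace_mul_eq {c t : ℕ} (A B : Matrix (Fin c) (Fin t) ℝ) :
    Matrix.trace (Aᵀ * B) = ∑ i, ∑ j, A i j * B i j := by
  simp [Matrix.trace, Matrix.mul_apply, Matrix.diag, Matrix.transpose_apply]
  rw [Finset.sum_comm]

lemma key_identity {c t : ℕ} (P Q S R : Matrix (Fin c) (Fin t) ℝ) :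
    frobSq (P - S) - frobSq (Q - S) =
      frobSq (P - R) - frobSq (Q - R)
        - 2 * Matrix.trace ((P - Q)ᵀ * (S - R)) := by
  simp only [frobSq, trace_mul_eq, Matrix.sub_apply, Finset.mul_sum,
    ← Finset.sum_sub_distrib]
  apply Finset.sum_congr rfl
  intro i _
  apply Finset.sum_congr rfl
  intro j _
  ring

theorem stmt1 {c t m : ℕ}
    (Y Ystar : Matrix (Fin c) (Fin t) ℝ)
    (Ybar Yhat : Fin m → Matrix (Fin c) (Fin t) ℝ)
    (hfeas : ∀ k j, frobSq (Y - Ybar k) ≤ frobSq (Yhat j - Ybar k))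
    (hcond : ∃ k, ∀ j,
      Matrix.trace ((Yhat j - Y)ᵀ * (Ystar - Ybar k)) ≤ 0) :
    ∀ j, frobSq (Y - Ystar) ≤ frobSq (Yhat j - Ystar) := by
  obtain ⟨k, hk⟩ := hcond
  intro j
  have h := key_identity (Yhat j) Y Ystar (Ybar k)
  have h1 := hfeas k j
  have h2 := hk j
  linarith
end

section
/- For any real numbers g and y with y ∈ {−1, 1}, the hinge loss admits the variational reformulation max(1 − y·g, 0) = min_{μ ≥ 0} |g − y − y·μ|, where the minimum is over nonnegative reals μ. -/
theorem stmt2 (g y : ℝ) (hy : y = -1 ∨ y = 1) :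
    IsLeast {x : ℝ | ∃ μ : ℝ, 0 ≤ μ ∧ x = |g - y - y * μ|}
      (max (1 - y * g) 0) := by
  have hy2 : y * y = 1 := by rcases hy with h | h <;> simp [h]
  have key : ∀ μ : ℝ, |g - y - y * μ| = |y * g - 1 - μ| := by
    intro μ
    have : g - y - y * μ = y * (y * g - 1 - μ) := by rcases hy with h | h <;> (subst h; ring)
    rw [this, abs_mul]
    rcases hy with h | h <;> simp [h]
  constructor
  · refine ⟨max (y * g - 1) 0, le_max_right _ _, ?_⟩
    rw [key]
    rcases le_total (y * g - 1) 0 with h | h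
    · rw [max_eq_right h, max_eq_left (by linarith)]
      rw [abs_of_nonpos (by linarith)]; ring
    · rw [max_eq_left h, max_eq_right (by linarith)]
      simp [abs_of_nonpos, h]
  · rintro x ⟨μ, hμ, rfl⟩
    rw [key]
    apply max_le
    · calc 1 - y * g ≤ 1 - y * g + μ := by linarith
        _ ≤ |y * g - 1 - μ| := by rw [abs_sub_comm]; have := le_abs_self (μ - (y * g - 1)); linarith
    · exact abs_nonneg _
end

section
/- For any real numbers g and y with y ∈ {−1, 1}, the capped hinge loss satisfies min(max(1 − y·g, 0), 1) = min(min_{μ ≥ 0} |g − y − y·μ|, 1). -/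
lemma aux_inf (a : ℝ) :
    sInf {x : ℝ | ∃ μ : ℝ, 0 ≤ μ ∧ x = |a - μ|} = max (-a) 0 := by
  apply le_antisymm
  · have hmem : max (-a) 0 ∈ {x : ℝ | ∃ μ : ℝ, 0 ≤ μ ∧ x = |a - μ|} := by
      simp only [Set.mem_setOf_eq]
      refine ⟨max a 0, le_max_right _ _, ?_⟩
      rcases le_or_gt 0 a with h | h
      · simp [max_eq_left h, abs_of_nonpos, h, neg_nonpos.mpr h]
      · rw [max_eq_right h.le, max_eq_left (neg_nonneg.mpr h.le), sub_zero,
          abs_of_nonpos h.le]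
    exact csInf_le ⟨0, fun x hx => by obtain ⟨μ, _, rfl⟩ := hx; exact abs_nonneg _⟩ hmem
  · have hne : Set.Nonempty {x : ℝ | ∃ μ : ℝ, 0 ≤ μ ∧ x = |a - μ|} :=
      ⟨|a - 0|, Set.mem_setOf_eq ▸ ⟨0, le_refl 0, rfl⟩⟩
    apply le_csInf hne
    rintro x ⟨μ, hμ, rfl⟩
    refine max_le ?_ (abs_nonneg _)
    calc -a ≤ μ - a := by linarith
    _ ≤ |a - μ| := by rw [abs_sub_comm]; exact le_abs_self _

theorem stmt3 (g y : ℝ) (hy : y = -1 ∨ y = 1) :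
    min (max (1 - y * g) 0) 1 =
      min (sInf {x : ℝ | ∃ μ : ℝ, 0 ≤ μ ∧ x = |g - y - y * μ|}) 1 := by
  rcases hy with rfl | rfl
  · have hset : {x : ℝ | ∃ μ : ℝ, 0 ≤ μ ∧ x = |g - (-1) - (-1) * μ|}
        = {x : ℝ | ∃ μ : ℝ, 0 ≤ μ ∧ x = |(-(g + 1)) - μ|} := by
      ext x
      constructor <;> rintro ⟨μ, hμ, rfl⟩ <;> exact ⟨μ, hμ, by rw [abs_sub_comm]; ring_nf⟩
    rw [hset, aux_inf]
    norm_num [max_comm]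
    ring_nf
  · have hset : {x : ℝ | ∃ μ : ℝ, 0 ≤ μ ∧ x = |g - 1 - 1 * μ|}
        = {x : ℝ | ∃ μ : ℝ, 0 ≤ μ ∧ x = |(g - 1) - μ|} := by
      ext x
      constructor <;> rintro ⟨μ, hμ, rfl⟩ <;> exact ⟨μ, hμ, by ring_nf⟩
    rw [hset, aux_inf]
    norm_num [neg_sub]
end
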